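/- Let B be a finite set of Boolean functions such that the clone [B] generated by B equals BF, the set of all Boolean functions. Then there exist propositional B-formulas f(x,y) and g(x,y) such that f represents the function x ∨ y, g represents the function x ∧ y, and in each of these formulas both variables x and y occur exactly once. -/

import Mathlib

/-- A Boolean function of some arity `n` (arity 0 gives the constant functions). -/
abbrev BFun : Type := Σ n : ℕ, (Fin n → Bool) → Bool

/-- A clone: a set of Boolean functions containing all projections and closed
under composition (superposition). -/
def IsClone (C : Set BFun) : Prop :=
  (∀ (n : ℕ) (k : Fin n), (⟨n, fun b => b k⟩ : BFun) ∈ C) ∧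
  (∀ f ∈ C, ∀ (m : ℕ) (g : Fin (Sigma.fst f) → ((Fin m → Bool) → Bool)),
    (∀ k, (⟨m, g k⟩ : BFun) ∈ C) →
    (⟨m, fun b => f.2 fun k => g k b⟩ : BFun) ∈ C)

/-- `cloneGen B` = `[B]`, the smallest clone containing `B`. -/
def cloneGen (B : Set BFun) : Set BFun := ⋂₀ {C | IsClone C ∧ B ⊆ C}

/-- Propositional formulas over variables `V` with arbitrary Boolean connectives. -/
inductive PForm (V : Type) : Type
  | var : V → PForm V
  | app : (n : ℕ) → ((Fin n → Bool) → Bool) → (Fin n → PForm V) → PForm V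

/-- Evaluation under an assignment `σ`: the Boolean function represented by the formula. -/
def PForm.eval {V : Type} (σ : V → Bool) : PForm V → Bool
  | PForm.var x => σ x
  | PForm.app _ f args => f fun k => PForm.eval σ (args k)

/-- All connectives occurring in the formula come from `B` (a `B`-formula). -/
def PForm.usesFuns {V : Type} (B : Set BFun) : PForm V → Prop
  | PForm.var _ => True
  | PForm.app n f args => (⟨n, f⟩ : BFun) ∈ B ∧ ∀ k, PForm.usesFuns B (args k)

/-- Number of (syntactic) occurrences of the variable `x` in the formula. -/
def PForm.occ {V : Type} [DecidableEq V] (x : V) : PForm V → ℕ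
  | PForm.var y => if y = x then 1 else 0
  | PForm.app _ _ args => ∑ k, PForm.occ x (args k)

/-- The unary Boolean negation function. -/
def notFun : BFun := ⟨1, fun b => ! b 0⟩

/-- The 0-ary constant Boolean function with value `c`. -/
def constFun (c : Bool) : BFun := ⟨0, fun _ => c⟩

/-- The binary Boolean OR function. -/
def orFun : BFun := ⟨2, fun b => b 0 || b 1⟩

/-- The binary Boolean AND function. -/
def andFun : BFun := ⟨2, fun b => b 0 && b 1⟩

/-- The clone M of all monotone Boolean functions. -/
def monotoneFuns : Set BFun :=
  {f : BFun | ∀ a b : Fin f.1 → Bool, (∀ k, a k ≤ b k) → f.2 a ≤ f.2 b}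


/-! ### Auxiliary machinery -/

def pSubst {V W : Type} (s : V → PForm W) : PForm V → PForm W
  | .var x => s x
  | .app n f args => .app n f (fun k => pSubst s (args k))

lemma eval_pSubst {V W : Type} (σ : W → Bool) (s : V → PForm W) (φ : PForm V) :
    PForm.eval σ (pSubst s φ) = PForm.eval (fun v => PForm.eval σ (s v)) φ := by
  induction φ with
  | var x => rfl
  | app n f args ih => simp only [pSubst, PForm.eval]; congr 1; funext k; exact ih k

lemma uses_pSubst {V W : Type} {B : Set BFun} (s : V → PForm W) (φ : PForm V)
    (h1 : PForm.usesFuns B φ) (h2 : ∀ v, PForm.usesFuns B (s v)) :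
    PForm.usesFuns B (pSubst s φ) := by
  induction φ with
  | var x => exact h2 x
  | app n f args ih =>
      simp only [PForm.usesFuns] at h1 ⊢
      exact ⟨h1.1, fun k => ih k (h1.2 k)⟩

lemma occ_pSubst_fin0 {W : Type} [DecidableEq W] (s : Fin 0 → PForm W) (x : W)
    (φ : PForm (Fin 0)) : PForm.occ x (pSubst s φ) = 0 := by
  induction φ with
  | var v => exact v.elim0
  | app n f args ih =>
      simp only [pSubst, PForm.occ]
      exact Finset.sum_eq_zero fun k _ => ih k

def BRep (B : Set BFun) : Set BFun :=
  {f | ∃ φ : PForm (Fin f.1), PForm.usesFuns B φ ∧ ∀ σ, PForm.eval σ φ = f.2 σ}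

lemma isClone_BRep (B : Set BFun) : IsClone (BRep B) := by
  constructor
  · intro n k
    exact ⟨.var k, trivial, fun σ => rfl⟩
  · rintro f ⟨φ, hu, he⟩ m g hg
    choose ψ hψu hψe using hg
    refine ⟨pSubst ψ φ, uses_pSubst _ _ hu hψu, fun σ => ?_⟩
    rw [eval_pSubst, he (fun v => PForm.eval σ (ψ v))]
    exact congrArg f.2 (funext fun k => hψe k σ)

lemma subset_BRep (B : Set BFun) : B ⊆ BRep B := by
  rintro ⟨n, f⟩ hf
  exact ⟨.app n f (fun k => .var k), ⟨hf, fun k => trivial⟩, fun σ => rfl⟩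

lemma cloneGen_subset {B C : Set BFun} (hC : IsClone C) (hBC : B ⊆ C) : cloneGen B ⊆ C :=
  Set.sInter_subset_of_mem ⟨hC, hBC⟩

lemma isClone_mono : IsClone monotoneFuns := by
  constructor
  · intro n k a b hab; exact hab k
  · intro f hf m g hg a b hab
    exact hf _ _ (fun k => hg k a b hab)

lemma bool_lt : ∀ u v : Bool, u < v → u = false ∧ v = true := by decide

lemma chain {n : ℕ} (f : (Fin n → Bool) → Bool) (s : Finset (Fin n)) :
    ∀ (a b : Fin n → Bool), (∀ k, a k ≤ b k) → (∀ k, k ∉ s → a k = b k) →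
    f a = true → f b = false →
    ∃ (c : Fin n → Bool) (i : Fin n), c i = false ∧ f c = true ∧
      f (Function.update c i true) = false := by
  classical
  induction s using Finset.induction with
  | empty =>
      intro a b _ hout ha hb
      have : a = b := funext fun k => hout k (Finset.notMem_empty k)
      rw [this, hb] at ha
      exact absurd ha (by simp)
  | @insert i s _ ih =>
      intro a b hab hout ha hb
      set c := Function.update a i (b i) with hc
      cases hfc : f c with
      | true =>
          refine ih c b ?_ ?_ hfc hb
          · intro k
            by_cases hk : k = i
            · subst hk; simp [hc]
            · rw [hc, Function.update_of_ne hk]; exact hab k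
          · intro k hk
            by_cases hki : k = i
            · subst hki; simp [hc]
            · have hk2 : k ∉ insert i s := by simp [hki, hk]
              rw [hc, Function.update_of_ne hki]
              exact hout k hk2
      | false =>
          have hne : a i ≠ b i := by
            intro h
            have hca : c = a := by
              funext k
              by_cases hk : k = i
              · subst hk; simp [hc, h]
              · rw [hc, Function.update_of_ne hk]
            rw [hca, ha] at hfc
            exact absurd hfc (by simp)
          have hai : a i = false ∧ b i = true := by
            have h1 := hab i
            revert h1 hne
            cases a i <;> cases b i <;> simp
          refine ⟨a, i, hai.1, ha, ?_⟩
          have : Function.update a i true = c := by rw [hc, hai.2]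
          rw [this, hfc]

def bZ (b : Bool) : ZMod 2 := if b then 1 else 0

@[simp] lemma toZ_true : bZ true = 1 := rfl
@[simp] lemma toZ_false : bZ false = 0 := rfl

lemma zmod2_eq_of_add_eq_zero : ∀ u v : ZMod 2, u + v = 0 → u = v := by decide
lemma zmod2_cancel : ∀ u s c : ZMod 2, u + s = c → u = c + s := by decide

lemma xor4 : ∀ a b c d : Bool,
    (xor (xor (xor a b) c) d = false) → bZ a + bZ b + bZ c + bZ d = 0 := by decide

lemma const_of_flip {n : ℕ} {α : Type*} (G : (Fin n → Bool) → α)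
    (h : ∀ x j, G (Function.update x j false) = G x) (x : Fin n → Bool) :
    G x = G (fun _ => false) := by
  classical
  generalize hm : (Finset.univ.filter (fun j => x j = true)).card = m
  induction m generalizing x with
  | zero =>
      have hall : ∀ j, x j = false := by
        intro j
        by_contra hj
        have hj' : x j = true := by revert hj; cases x j <;> simp
        have hmem : j ∈ Finset.univ.filter (fun j => x j = true) := by simp [hj']
        rw [Finset.card_eq_zero] at hm
        rw [hm] at hmem
        exact absurd hmem (Finset.notMem_empty j)
      congr 1
      funext j
      exact hall j
  | succ m ih =>
      have hne : (Finset.univ.filter (fun j => x j = true)).Nonempty := by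
        rw [← Finset.card_pos, hm]; omega
      obtain ⟨j, hj⟩ := hne
      have hxj : x j = true := by simpa using hj
      have hcard : (Finset.univ.filter
          (fun k => Function.update x j false k = true)).card = m := by
        have hset : Finset.univ.filter (fun k => Function.update x j false k = true)
            = (Finset.univ.filter (fun k => x k = true)).erase j := by
          ext k
          by_cases hk : k = j
          · subst hk; simp
          · simp [Function.update_of_ne hk, hk]
        rw [hset, Finset.card_erase_of_mem hj, hm]
        omega
      rw [← h x j]
      exact ih _ hcard

def restr {n : ℕ} (F : (Fin n → Bool) → Bool) (i j : Fin n) (c : Fin n → Bool)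
    (x y : Bool) : Bool :=
  F (Function.update (Function.update c j y) i x)

def IsAffine (f : BFun) : Prop :=
  ∃ (c : ZMod 2) (a : Fin f.1 → ZMod 2), ∀ x, bZ (f.2 x) = c + ∑ i, a i * bZ (x i)

lemma affine_of_flat {n : ℕ} (F : (Fin n → Bool) → Bool)
    (h : ∀ i j : Fin n, i ≠ j → ∀ c : Fin n → Bool,
      xor (xor (xor (restr F i j c false false) (restr F i j c false true))
        (restr F i j c true false)) (restr F i j c true true) = false) :
    IsAffine ⟨n, F⟩ := by
  classical
  set D : Fin n → (Fin n → Bool) → ZMod 2 :=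
    fun i x => bZ (F (Function.update x i true)) + bZ (F (Function.update x i false))
    with hD
  have hDflip : ∀ (i : Fin n) (x : Fin n → Bool) (j : Fin n),
      D i (Function.update x j false) = D i x := by
    intro i x j
    by_cases hij : j = i
    · subst hij
      simp only [hD, Function.update_idem]
    · have key : D i (Function.update x j false) = D i (Function.update x j true) := by
        apply zmod2_eq_of_add_eq_zero
        have h4 := xor4 _ _ _ _ (h i j (fun hh => hij hh.symm) x)
        simp only [restr] at h4
        simp only [hD]
        linear_combination h4
      cases hxj : x j with
      | false =>
          have hx : Function.update x j false = x := by
            rw [← hxj]; exact Function.update_eq_self j x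
          rw [hx]
      | true =>
          have hx : Function.update x j true = x := by
            rw [← hxj]; exact Function.update_eq_self j x
          rw [key, hx]
  set a : Fin n → ZMod 2 := fun i => D i (fun _ => false) with ha
  have hDx : ∀ i x, D i x = a i := fun i x => const_of_flip (D i) (hDflip i) x
  set G : (Fin n → Bool) → ZMod 2 := fun x => bZ (F x) + ∑ i, a i * bZ (x i) with hG
  have hGflip : ∀ x j, G (Function.update x j false) = G x := by
    intro x j
    cases hxj : x j with
    | false =>
        have hx : Function.update x j false = x := by
          rw [← hxj]; exact Function.update_eq_self j x
        rw [hx]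
    | true =>
        have hupd : Function.update x j true = x := by
          rw [← hxj]; exact Function.update_eq_self j x
        have hDj : bZ (F x) + bZ (F (Function.update x j false)) = a j := by
          have := hDx j x
          rw [hD] at this
          dsimp only at this
          rw [hupd] at this
          exact this
        have hsum : ∀ (y : Fin n → Bool), ∑ i, a i * bZ (y i)
            = a j * bZ (y j) + ∑ i ∈ Finset.univ.erase j, a i * bZ (y i) :=
          fun y => (Finset.add_sum_erase Finset.univ _ (Finset.mem_univ j)).symm
        have herase : ∑ i ∈ Finset.univ.erase j, a i * bZ (Function.update x j false i)
            = ∑ i ∈ Finset.univ.erase j, a i * bZ (x i) := by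
          refine Finset.sum_congr rfl fun i hi => ?_
          rw [Function.update_of_ne (Finset.ne_of_mem_erase hi)]
        simp only [hG]
        rw [hsum, hsum, herase, Function.update_self, hxj, toZ_true, toZ_false]
        have h2 : (2 : ZMod 2) = 0 := rfl
        linear_combination hDj - bZ (F x) * h2
  refine ⟨bZ (F (fun _ => false)), a, fun x => ?_⟩
  have hGx : G x = G (fun _ => false) := const_of_flip G hGflip x
  simp only [hG, toZ_false, mul_zero, Finset.sum_const_zero, add_zero] at hGx
  exact zmod2_cancel _ _ _ hGx

lemma isClone_affine : IsClone {f : BFun | IsAffine f} := by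
  classical
  constructor
  · intro n k
    refine ⟨0, fun i => if i = k then 1 else 0, fun x => ?_⟩
    have hs : ∀ i, (if i = k then (1 : ZMod 2) else 0) * bZ (x i)
        = if i = k then bZ (x i) else 0 := by
      intro i; split <;> simp
    rw [Finset.sum_congr rfl fun i _ => hs i,
      Finset.sum_ite_eq' Finset.univ k fun i => bZ (x i)]
    simp
  · rintro f ⟨c, a, hf⟩ m g hg
    choose cg ag hgrep using hg
    have hgrep' : ∀ (k) (x : Fin m → Bool), bZ (g k x) = cg k + ∑ i : Fin m, ag k i * bZ (x i) :=
      fun k x => hgrep k x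
    refine ⟨c + ∑ k, a k * cg k, fun i => ∑ k, a k * ag k i, fun x => ?_⟩
    show bZ (f.2 fun k => g k x)
        = c + (∑ k, a k * cg k) + ∑ i : Fin m, (∑ k, a k * ag k i) * bZ (x i)
    rw [hf (fun k => g k x)]
    have h1 : ∀ k, a k * bZ (g k x)
        = a k * cg k + ∑ i : Fin m, a k * (ag k i * bZ (x i)) := by
      intro k
      rw [hgrep' k x, mul_add, Finset.mul_sum]
    rw [Finset.sum_congr rfl fun k _ => h1 k, Finset.sum_add_distrib, Finset.sum_comm]
    have h2 : ∀ i : Fin m, ∑ k, a k * (ag k i * bZ (x i))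
        = (∑ k, a k * ag k i) * bZ (x i) := by
      intro i
      rw [Finset.sum_mul]
      exact Finset.sum_congr rfl fun k _ => (mul_assoc _ _ _).symm
    rw [Finset.sum_congr rfl fun i _ => h2 i]
    ring

lemma andFun_not_affine : ¬ IsAffine andFun := by
  rintro ⟨c, a, h⟩
  have h00 := h ![false, false]
  have h01 := h ![false, true]
  have h10 := h ![true, false]
  have h11 := h ![true, true]
  simp only [andFun] at a h00 h01 h10 h11
  erw [Fin.sum_univ_two] at h00 h01 h10 h11
  simp at h00 h01 h10 h11
  have : (1 : ZMod 2) = 0 := by linear_combination h11 - h01 - h10 + h00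
  exact one_ne_zero this

lemma odd_and : ∀ h : Bool → Bool → Bool,
    xor (xor (xor (h false false) (h false true)) (h true false)) (h true true) = true →
    ∃ p q d : Bool, ∀ x y, xor d (h (xor p x) (xor q y)) = (x && y) := by decide

lemma odd_or : ∀ h : Bool → Bool → Bool,
    xor (xor (xor (h false false) (h false true)) (h true false)) (h true true) = true →
    ∃ p q d : Bool, ∀ x y, xor d (h (xor p x) (xor q y)) = (x || y) := by decide

/-- If `B` is a finite set of Boolean functions with `[B] = BF` (all
Boolean functions), then there are `B`-formulas `f(x,y)` and `g(x,y)` (variables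
`V = Fin 2`) representing `x ∨ y` and `x ∧ y` respectively, in each of which both
variables occur exactly once. -/
theorem stmt18 (B : Set BFun) (hfin : B.Finite) (hBF : cloneGen B = Set.univ) :
    ∃ f g : PForm (Fin 2),
      PForm.usesFuns B f ∧ (∀ σ : Fin 2 → Bool, PForm.eval σ f = (σ 0 || σ 1)) ∧
        PForm.occ (0 : Fin 2) f = 1 ∧ PForm.occ (1 : Fin 2) f = 1 ∧
      PForm.usesFuns B g ∧ (∀ σ : Fin 2 → Bool, PForm.eval σ g = (σ 0 && σ 1)) ∧
        PForm.occ (0 : Fin 2) g = 1 ∧ PForm.occ (1 : Fin 2) g = 1 := by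
  classical
  have hall : ∀ f : BFun, f ∈ BRep B := fun f =>
    cloneGen_subset (isClone_BRep B) (subset_BRep B) (hBF ▸ Set.mem_univ f)
  -- constant formulas over Fin 2 with no variable occurrences
  have hK : ∀ c : Bool, ∃ φ : PForm (Fin 2), PForm.usesFuns B φ ∧
      (∀ σ, PForm.eval σ φ = c) ∧ (∀ x, PForm.occ x φ = 0) := by
    intro c
    obtain ⟨ψ, hu, he⟩ := hall (constFun c)
    refine ⟨pSubst (fun v : Fin 0 => v.elim0) ψ, uses_pSubst _ _ hu (fun v => v.elim0),
      fun σ => ?_, fun x => occ_pSubst_fin0 _ _ ψ⟩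
    erw [eval_pSubst]
    exact he _
  choose K hKu hKe hKo using hK
  -- a non-monotone function in B, giving a negation gadget
  have hnotM : ¬ B ⊆ monotoneFuns := by
    intro hBM
    have hmem : notFun ∈ monotoneFuns :=
      cloneGen_subset isClone_mono hBM (hBF ▸ Set.mem_univ notFun)
    have h2 : (!false) ≤ (!true) :=
      hmem (fun _ => false) (fun _ => true) (fun _ => Bool.false_le true)
    exact absurd h2 (by decide)
  obtain ⟨fB, hfB, hfM⟩ := Set.not_subset.mp hnotM
  obtain ⟨nf, F⟩ := fB
  simp only [monotoneFuns, Set.mem_setOf_eq] at hfM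
  push_neg at hfM
  obtain ⟨a, b, hab, hnle⟩ := hfM
  obtain ⟨hFb, hFa⟩ := bool_lt _ _ hnle
  obtain ⟨cn, i0, hci, hct, hcf⟩ := chain F Finset.univ a b hab
    (fun k hk => absurd (Finset.mem_univ k) hk) hFa hFb
  set N : PForm (Fin 2) → PForm (Fin 2) :=
    fun φ => .app nf F (fun k => if k = i0 then φ else K (cn k)) with hN
  have hNe : ∀ (σ : Fin 2 → Bool) φ, PForm.eval σ (N φ) = ! PForm.eval σ φ := by
    intro σ φ
    simp only [hN, PForm.eval]
    cases hev : PForm.eval σ φ with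
    | false =>
        have harg : (fun k => PForm.eval σ (if k = i0 then φ else K (cn k))) = cn := by
          funext k
          by_cases hk : k = i0
          · subst hk; rw [if_pos rfl, hev, hci]
          · rw [if_neg hk, hKe]
        rw [harg, hct]
        rfl
    | true =>
        have harg : (fun k => PForm.eval σ (if k = i0 then φ else K (cn k)))
            = Function.update cn i0 true := by
          funext k
          by_cases hk : k = i0
          · subst hk; rw [if_pos rfl, hev, Function.update_self]
          · rw [if_neg hk, hKe, Function.update_of_ne hk]
        rw [harg, hcf]
        rfl
  have hNo : ∀ (x : Fin 2) φ, PForm.occ x (N φ) = PForm.occ x φ := by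
    intro x φ
    simp only [hN, PForm.occ]
    have hs : ∀ k : Fin nf, PForm.occ x (if k = i0 then φ else K (cn k))
        = if k = i0 then PForm.occ x φ else 0 := by
      intro k
      by_cases hk : k = i0
      · rw [if_pos hk, if_pos hk]
      · rw [if_neg hk, if_neg hk, hKo]
    rw [Finset.sum_congr rfl fun k _ => hs k,
      Finset.sum_ite_eq' Finset.univ i0 fun _ => PForm.occ x φ]
    simp
  have hNu : ∀ φ, PForm.usesFuns B φ → PForm.usesFuns B (N φ) := by
    intro φ hφ
    simp only [hN, PForm.usesFuns]
    refine ⟨hfB, fun k => ?_⟩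
    by_cases hk : k = i0
    · rw [if_pos hk]; exact hφ
    · rw [if_neg hk]; exact hKu _
  -- a non-affine function in B
  have hnotA : ¬ B ⊆ {f : BFun | IsAffine f} := by
    intro hBA
    exact andFun_not_affine
      (cloneGen_subset isClone_affine hBA (hBF ▸ Set.mem_univ andFun))
  obtain ⟨gB, hgB, hgA⟩ := Set.not_subset.mp hnotA
  obtain ⟨ng, G⟩ := gB
  have hflat : ¬ ∀ i j : Fin ng, i ≠ j → ∀ c : Fin ng → Bool,
      xor (xor (xor (restr G i j c false false) (restr G i j c false true))
        (restr G i j c true false)) (restr G i j c true true) = false := by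
    intro hfl
    exact hgA (affine_of_flat G hfl)
  push_neg at hflat
  obtain ⟨i, j, hij, c, hodd⟩ := hflat
  have hodd' : xor (xor (xor (restr G i j c false false) (restr G i j c false true))
      (restr G i j c true false)) (restr G i j c true true) = true := by
    revert hodd
    cases xor (xor (xor (restr G i j c false false) (restr G i j c false true))
      (restr G i j c true false)) (restr G i j c true true) <;> simp
  set H : PForm (Fin 2) → PForm (Fin 2) → PForm (Fin 2) := fun φ ψ =>
    .app ng G (fun k => if k = i then φ else if k = j then ψ else K (c k)) with hH
  have hHe : ∀ (σ : Fin 2 → Bool) φ ψ,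
      PForm.eval σ (H φ ψ) = restr G i j c (PForm.eval σ φ) (PForm.eval σ ψ) := by
    intro σ φ ψ
    simp only [hH, PForm.eval, restr]
    refine congrArg G (funext fun k => ?_)
    by_cases hk : k = i
    · subst hk; rw [if_pos rfl, Function.update_self]
    · rw [if_neg hk, Function.update_of_ne hk]
      by_cases hkj : k = j
      · subst hkj; rw [if_pos rfl, Function.update_self]
      · rw [if_neg hkj, Function.update_of_ne hkj, hKe]
  have hHo : ∀ (x : Fin 2) φ ψ,
      PForm.occ x (H φ ψ) = PForm.occ x φ + PForm.occ x ψ := by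
    intro x φ ψ
    simp only [hH, PForm.occ]
    have hs : ∀ k : Fin ng,
        PForm.occ x (if k = i then φ else if k = j then ψ else K (c k))
        = (if k = i then PForm.occ x φ else 0) + (if k = j then PForm.occ x ψ else 0) := by
      intro k
      by_cases hk : k = i
      · subst hk
        rw [if_pos rfl, if_pos rfl, if_neg hij, add_zero]
      · rw [if_neg hk, if_neg hk]
        by_cases hkj : k = j
        · subst hkj; rw [if_pos rfl, if_pos rfl, zero_add]
        · rw [if_neg hkj, if_neg hkj, hKo, add_zero]
    rw [Finset.sum_congr rfl fun k _ => hs k, Finset.sum_add_distrib,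
      Finset.sum_ite_eq' Finset.univ i fun _ => PForm.occ x φ,
      Finset.sum_ite_eq' Finset.univ j fun _ => PForm.occ x ψ]
    simp
  have hHu : ∀ φ ψ, PForm.usesFuns B φ → PForm.usesFuns B ψ →
      PForm.usesFuns B (H φ ψ) := by
    intro φ ψ hφ hψ
    simp only [hH, PForm.usesFuns]
    refine ⟨hgB, fun k => ?_⟩
    by_cases hk : k = i
    · rw [if_pos hk]; exact hφ
    · rw [if_neg hk]
      by_cases hkj : k = j
      · rw [if_pos hkj]; exact hψ
      · rw [if_neg hkj]; exact hKu _
  -- conditional negation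
  set cN : Bool → PForm (Fin 2) → PForm (Fin 2) := fun b φ => if b then N φ else φ
    with hcN
  have hcNe : ∀ b (σ : Fin 2 → Bool) φ,
      PForm.eval σ (cN b φ) = xor b (PForm.eval σ φ) := by
    intro b σ φ
    cases b
    · simp [hcN]
    · simp [hcN, hNe]
  have hcNo : ∀ b (x : Fin 2) φ, PForm.occ x (cN b φ) = PForm.occ x φ := by
    intro b x φ
    cases b
    · simp [hcN]
    · simp [hcN, hNo]
  have hcNu : ∀ b φ, PForm.usesFuns B φ → PForm.usesFuns B (cN b φ) := by
    intro b φ hφ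
    cases b
    · simpa [hcN] using hφ
    · simp only [hcN]
      simpa using hNu φ hφ
  obtain ⟨p1, q1, d1, hor⟩ := odd_or (fun x y => restr G i j c x y) hodd'
  obtain ⟨p2, q2, d2, hand⟩ := odd_and (fun x y => restr G i j c x y) hodd'
  refine ⟨cN d1 (H (cN p1 (.var 0)) (cN q1 (.var 1))),
          cN d2 (H (cN p2 (.var 0)) (cN q2 (.var 1))),
          hcNu _ _ (hHu _ _ (hcNu _ _ trivial) (hcNu _ _ trivial)), ?_, ?_, ?_,
          hcNu _ _ (hHu _ _ (hcNu _ _ trivial) (hcNu _ _ trivial)), ?_, ?_, ?_⟩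
  · intro σ
    rw [hcNe, hHe, hcNe, hcNe]
    exact hor (σ 0) (σ 1)
  · rw [hcNo, hHo, hcNo, hcNo]
    simp [PForm.occ]
  · rw [hcNo, hHo, hcNo, hcNo]
    simp [PForm.occ]
  · intro σ
    rw [hcNe, hHe, hcNe, hcNe]
    exact hand (σ 0) (σ 1)
  · rw [hcNo, hHo, hcNo, hcNo]
    simp [PForm.occ]
  · rw [hcNo, hHo, hcNo, hcNo]
    simp [PForm.occ]
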